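/- Let n ≥ 2, let p_1, ..., p_n be distinct positive real numbers, and let r be a real number with 1 < r < 3. Then the inertia of the Kwong matrix K_r(p_1,...,p_n) equals (1, 0, n−1). -/

import Mathlib

open MeasureTheory Set Real Filter
open scoped ENNReal Topology

lemma nonneg_ae_restrict_Ioi {f : ℝ → ℝ} (hnn : ∀ x ∈ Ioi (0:ℝ), 0 ≤ f x) :
    0 ≤ᵐ[volume.restrict (Ioi (0:ℝ))] f := by
  filter_upwards [ae_restrict_mem measurableSet_Ioi] with x hx using hnn x hx

/-- positivity of an integral of a positive-on-Ioi integrable function -/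
lemma integral_pos_of_pos_on_Ioi {f : ℝ → ℝ} (hf : IntegrableOn f (Ioi (0:ℝ)))
    (hpos : ∀ x ∈ Ioi (0:ℝ), 0 < f x) : 0 < ∫ x in Ioi (0:ℝ), f x := by
  rw [setIntegral_pos_iff_support_of_nonneg_ae
    (nonneg_ae_restrict_Ioi fun x hx => (hpos x hx).le) hf]
  have hsub : Ioi (0:ℝ) ⊆ Function.support f ∩ Ioi 0 := fun x hx => ⟨(hpos x hx).ne', hx⟩
  have h1 : (0:ℝ≥0∞) < volume (Ioi (0:ℝ)) := by simp
  exact h1.trans_le (measure_mono hsub)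

lemma integral_pos_of_nonneg_of_pos_at {f : ℝ → ℝ} (hf : IntegrableOn f (Ioi (0:ℝ)))
    (hcont : Continuous f) (hnn : ∀ x ∈ Ioi (0:ℝ), 0 ≤ f x)
    {t₀ : ℝ} (ht₀ : 0 < t₀) (hft₀ : 0 < f t₀) : 0 < ∫ x in Ioi (0:ℝ), f x := by
  rw [setIntegral_pos_iff_support_of_nonneg_ae (nonneg_ae_restrict_Ioi hnn) hf]
  have hopen : IsOpen (Function.support f ∩ Ioi 0) := by
    have h : Function.support f = f ⁻¹' {0}ᶜ := by ext x; simp [Function.mem_support]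
    rw [h]
    exact ((isOpen_compl_singleton).preimage hcont).inter isOpen_Ioi
  exact hopen.measure_pos volume ⟨t₀, hft₀.ne', ht₀⟩

lemma integral_exp_neg_mul_Ioi_zero {b : ℝ} (hb : 0 < b) :
    ∫ t in Ioi (0:ℝ), Real.exp (-b * t) = b⁻¹ := by
  have h := integral_comp_mul_left_Ioi (fun x => Real.exp (-x)) 0 hb
  simp only [mul_zero, integral_exp_neg_Ioi, neg_zero, Real.exp_zero, smul_eq_mul, mul_one] at h
  rw [← h]
  congr 1 with t
  rw [neg_mul]

/-- Strict positive definiteness of the Cauchy-type quadratic form. -/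
lemma cauchy_quadform_pos {n : ℕ} {p : Fin n → ℝ} (hpos : ∀ i, 0 < p i)
    (hinj : Function.Injective p) {z : Fin n → ℝ} (hz : z ≠ 0) :
    0 < ∑ i, ∑ j, z i * z j / (p i + p j) := by
  classical
  set h : ℝ → ℝ := fun t => ∑ i, z i * Real.exp (-p i * t) with hh
  -- integrability of each term
  have hint : ∀ i j : Fin n,
      IntegrableOn (fun t => (z i * Real.exp (-p i * t)) * (z j * Real.exp (-p j * t)))
        (Ioi (0:ℝ)) := by
    intro i j
    have : IntegrableOn (fun t => Real.exp (-(p i + p j) * t)) (Ioi (0:ℝ)) :=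
      exp_neg_integrableOn_Ioi 0 (by have := hpos i; have := hpos j; linarith)
    have h2 : IntegrableOn (fun t => (z i * z j) * Real.exp (-(p i + p j) * t)) (Ioi (0:ℝ)) :=
      this.const_mul (z i * z j)
    refine IntegrableOn.congr_fun h2 (fun t ht => ?_) measurableSet_Ioi
    rw [show (-(p i + p j) * t) = (-p i * t) + (-p j * t) by ring, Real.exp_add]
    ring
  have hsq : ∀ t : ℝ, h t ^ 2 =
      ∑ i, ∑ j, (z i * Real.exp (-p i * t)) * (z j * Real.exp (-p j * t)) := by
    intro t
    rw [hh, sq, Finset.sum_mul_sum]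
  have hIntSq : IntegrableOn (fun t => h t ^ 2) (Ioi (0:ℝ)) := by
    have : IntegrableOn (fun t => ∑ i, ∑ j,
        (z i * Real.exp (-p i * t)) * (z j * Real.exp (-p j * t))) (Ioi (0:ℝ)) := by
      apply integrable_finset_sum
      intro i _
      exact integrable_finset_sum _ (fun j _ => hint i j)
    exact this.congr_fun (fun t _ => (hsq t).symm) measurableSet_Ioi
  -- the integral identity
  have hkey : ∑ i, ∑ j, z i * z j / (p i + p j) = ∫ t in Ioi (0:ℝ), h t ^ 2 := by
    rw [MeasureTheory.integral_congr_ae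
      (ae_restrict_of_forall_mem measurableSet_Ioi (fun t _ => hsq t)),
      MeasureTheory.integral_finset_sum _ (fun i _ =>
        integrable_finset_sum _ (fun j _ => hint i j))]
    refine Finset.sum_congr rfl (fun i _ => ?_)
    rw [MeasureTheory.integral_finset_sum _ (fun j _ => hint i j)]
    refine Finset.sum_congr rfl (fun j _ => ?_)
    have hb : 0 < p i + p j := by have := hpos i; have := hpos j; linarith
    have : ∀ t : ℝ, (z i * Real.exp (-p i * t)) * (z j * Real.exp (-p j * t))
        = (z i * z j) * Real.exp (-(p i + p j) * t) := by
      intro t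
      rw [show (-(p i + p j) * t) = (-p i * t) + (-p j * t) by ring, Real.exp_add]
      ring
    rw [MeasureTheory.integral_congr_ae
      (ae_restrict_of_forall_mem measurableSet_Ioi (fun t _ => this t)),
      MeasureTheory.integral_const_mul, integral_exp_neg_mul_Ioi_zero hb, div_eq_mul_inv]
  rw [hkey]
  -- find a point where h is nonzero
  obtain ⟨i₁, hi₁⟩ := Function.ne_iff.mp hz
  have hSne : (Finset.univ.filter (fun i => z i ≠ 0)).Nonempty :=
    ⟨i₁, by simpa using hi₁⟩
  obtain ⟨i₀, hi₀mem, hi₀min⟩ := Finset.exists_min_image _ p hSne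
  have hzi₀ : z i₀ ≠ 0 := by simpa using hi₀mem
  have htend : Tendsto (fun t => h t * Real.exp (p i₀ * t)) atTop
      (𝓝 (∑ i, if i = i₀ then z i₀ else 0)) := by
    have : ∀ t : ℝ, h t * Real.exp (p i₀ * t)
        = ∑ i, z i * Real.exp ((p i₀ - p i) * t) := by
      intro t
      rw [hh, Finset.sum_mul]
      refine Finset.sum_congr rfl (fun i _ => ?_)
      rw [show ((p i₀ - p i) * t) = (-p i * t) + (p i₀ * t) by ring, Real.exp_add]
      ring
    simp_rw [this]
    apply tendsto_finset_sum
    intro i _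
    by_cases hiz : z i = 0
    · have : i ≠ i₀ := fun he => hzi₀ (he ▸ hiz)
      simp [hiz, this]
    · by_cases hii : i = i₀
      · subst hii
        simp only [if_pos rfl, sub_self, zero_mul, Real.exp_zero]
        simp only [mul_one]
        exact tendsto_const_nhds
      · have hlt : p i₀ < p i := by
          refine lt_of_le_of_ne (hi₀min i (by simpa using hiz)) ?_
          intro he; exact hii (hinj he.symm)
        have hc : p i₀ - p i < 0 := by linarith
        have : Tendsto (fun t : ℝ => Real.exp ((p i₀ - p i) * t)) atTop (𝓝 0) :=
          tendsto_exp_atBot.comp (tendsto_id.const_mul_atTop_of_neg hc)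
        simpa [if_neg hii] using (this.const_mul (z i))
  have hlim : (∑ i, if i = i₀ then z i₀ else 0) = z i₀ := by simp
  rw [hlim] at htend
  have hev : ∀ᶠ t in atTop, h t * Real.exp (p i₀ * t) ≠ 0 := htend.eventually_ne hzi₀
  obtain ⟨t₀, ht₀ne, ht₀pos⟩ :=
    ((hev.and (eventually_gt_atTop (0:ℝ))).exists)
  have hht₀ : h t₀ ≠ 0 := fun hzero => ht₀ne (by rw [hzero, zero_mul])
  have hcont : Continuous h := by
    apply continuous_finset_sum
    intro i _
    exact (continuous_const.mul ((continuous_const.mul continuous_id).rexp))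
  exact integral_pos_of_nonneg_of_pos_at hIntSq (hcont.pow 2)
    (fun x _ => sq_nonneg _) ht₀pos
    (lt_of_le_of_ne (sq_nonneg _) (Ne.symm (pow_ne_zero 2 hht₀)))

section RpowRep
variable {s : ℝ} (hs0 : 0 < s) (hs1 : s < 1)

lemma base_integrable (hs0 : 0 < s) (hs1 : s < 1) :
    IntegrableOn (fun l : ℝ => l ^ (s - 1) * (1 / (1 + l))) (Ioi (0:ℝ)) := by
  have hcont : ContinuousOn (fun l : ℝ => l ^ (s - 1) * (1 / (1 + l))) (Ioi (0:ℝ)) := by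
    apply ContinuousOn.mul
    · exact ContinuousOn.rpow_const continuousOn_id (fun x hx => Or.inl (ne_of_gt hx))
    · exact ContinuousOn.div continuousOn_const
        (continuous_const.add continuous_id).continuousOn
        (fun x hx => by have : (0:ℝ) < x := hx; intro h; linarith [h])
  have hIoc : IntegrableOn (fun l : ℝ => l ^ (s - 1) * (1 / (1 + l))) (Ioc (0:ℝ) 1) := by
    have hg : IntegrableOn (fun l : ℝ => l ^ (s - 1)) (Ioc (0:ℝ) 1) := by
      rw [← intervalIntegrable_iff_integrableOn_Ioc_of_le zero_le_one]
      exact intervalIntegral.intervalIntegrable_rpow' (by linarith)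
    refine Integrable.mono' hg ((hcont.mono Ioc_subset_Ioi_self).aestronglyMeasurable measurableSet_Ioc) ?_
    filter_upwards [ae_restrict_mem measurableSet_Ioc] with l hl
    have hl0 : 0 < l := hl.1
    have h1 : (0:ℝ) < 1 + l := by linarith
    rw [Real.norm_eq_abs, abs_of_nonneg (by positivity)]
    calc l ^ (s-1) * (1/(1+l)) ≤ l ^ (s-1) * 1 := by
          apply mul_le_mul_of_nonneg_left _ (le_of_lt (Real.rpow_pos_of_pos hl0 _))
          rw [div_le_one h1]; linarith
      _ = l ^ (s-1) := mul_one _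
  have hIoi : IntegrableOn (fun l : ℝ => l ^ (s - 1) * (1 / (1 + l))) (Ioi (1:ℝ)) := by
    have hg : IntegrableOn (fun l : ℝ => l ^ (s - 2)) (Ioi (1:ℝ)) :=
      integrableOn_Ioi_rpow_of_lt (by linarith) one_pos
    refine Integrable.mono' hg ((hcont.mono (Ioi_subset_Ioi zero_le_one)).aestronglyMeasurable measurableSet_Ioi) ?_
    filter_upwards [ae_restrict_mem measurableSet_Ioi] with l hl
    have hl0 : (0:ℝ) < l := lt_trans one_pos hl
    have h1 : (0:ℝ) < 1 + l := by linarith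
    rw [Real.norm_eq_abs, abs_of_nonneg (by positivity)]
    calc l ^ (s-1) * (1/(1+l)) ≤ l ^ (s-1) * (1/l) := by
          apply mul_le_mul_of_nonneg_left _ (le_of_lt (Real.rpow_pos_of_pos hl0 _))
          exact one_div_le_one_div_of_le hl0 (by linarith)
      _ = l ^ (s-2) := by
          rw [one_div, ← Real.rpow_neg_one l, ← Real.rpow_add hl0]
          congr 1; ring
  have : Ioc (0:ℝ) 1 ∪ Ioi 1 = Ioi 0 := Ioc_union_Ioi_eq_Ioi zero_le_one
  rw [← this]
  exact hIoc.union hIoi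
end RpowRep

section Rep
variable {s : ℝ}

lemma rep_comp_eq {x : ℝ} (hx : 0 < x) {μ : ℝ} (hμ : μ ∈ Ioi (0:ℝ)) :
    (x*μ) ^ (s - 1) * (x / (x + x*μ)) = x ^ (s-1) * (μ ^ (s - 1) * (1 / (1 + μ))) := by
  have hμ0 : (0:ℝ) < μ := hμ
  rw [Real.mul_rpow hx.le hμ0.le]
  have h1 : x + x * μ = x * (1 + μ) := by ring
  have h2 : (0:ℝ) < 1 + μ := by linarith
  have h3 : x / (x + x*μ) = 1/(1+μ) := by
    rw [h1]; rw [eq_div_iff h2.ne']; field_simp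
  rw [h3]; ring

lemma rep_integrable (hs0 : 0 < s) (hs1 : s < 1) {x : ℝ} (hx : 0 < x) :
    IntegrableOn (fun l : ℝ => l ^ (s - 1) * (x / (x + l))) (Ioi (0:ℝ)) := by
  set g : ℝ → ℝ := fun l => l ^ (s - 1) * (x / (x + l)) with hg
  have h1 : IntegrableOn (fun μ => g (x*μ)) (Ioi (0:ℝ)) := by
    have hbase : IntegrableOn (fun μ : ℝ => x ^ (s-1) * (μ ^ (s - 1) * (1 / (1 + μ))))
        (Ioi (0:ℝ)) := (base_integrable hs0 hs1).const_mul _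
    exact IntegrableOn.congr_fun hbase (fun μ hμ => (rep_comp_eq hx hμ).symm) measurableSet_Ioi
  have := (integrableOn_Ioi_comp_mul_left_iff g 0 hx).mp h1
  rwa [mul_zero] at this

lemma rep_integral (hs0 : 0 < s) (hs1 : s < 1) {x : ℝ} (hx : 0 < x) :
    ∫ l in Ioi (0:ℝ), l ^ (s - 1) * (x / (x + l))
      = (∫ l in Ioi (0:ℝ), l ^ (s - 1) * (1 / (1 + l))) * x ^ s := by
  set g : ℝ → ℝ := fun l => l ^ (s - 1) * (x / (x + l)) with hg
  have hsub := integral_comp_mul_left_Ioi g 0 hx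
  rw [mul_zero] at hsub
  have hL : ∫ μ in Ioi (0:ℝ), g (x*μ)
      = x ^ (s-1) * ∫ l in Ioi (0:ℝ), l ^ (s - 1) * (1 / (1 + l)) := by
    rw [MeasureTheory.integral_congr_ae (ae_restrict_of_forall_mem measurableSet_Ioi
      (fun μ hμ => rep_comp_eq hx hμ)), MeasureTheory.integral_const_mul]
  rw [hL, smul_eq_mul] at hsub
  have h4 : ∫ l in Ioi (0:ℝ), g l = x * (x ^ (s-1) *
      ∫ l in Ioi (0:ℝ), l ^ (s - 1) * (1 / (1 + l))) := by
    rw [hsub, ← mul_assoc, mul_inv_cancel₀ hx.ne', one_mul]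
  have h5 := Real.rpow_add hx 1 (s-1)
  rw [Real.rpow_one, show (1:ℝ) + (s-1) = s by ring] at h5
  rw [h4, h5]; ring

lemma base_integral_pos (hs0 : 0 < s) (hs1 : s < 1) :
    0 < ∫ l in Ioi (0:ℝ), l ^ (s - 1) * (1 / (1 + l)) := by
  apply integral_pos_of_pos_on_Ioi (base_integrable hs0 hs1)
  intro l hl
  have hl0 : (0:ℝ) < l := hl
  have : (0:ℝ) < 1 + l := by linarith
  positivity

/-- The core positive-definiteness of the Kwong quadratic form for `0 < s < 1`. -/
lemma kwong_core {n : ℕ} {p : Fin n → ℝ} (hp : ∀ i, 0 < p i) (hinj : Function.Injective p)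
    {s : ℝ} (hs0 : 0 < s) (hs1 : s < 1) {y : Fin n → ℝ} (hy : y ≠ 0) :
    0 < ∑ i, ∑ j, y i * y j * ((p i ^ s + p j ^ s) / (p i + p j)) := by
  classical
  set I := ∫ l in Ioi (0:ℝ), l ^ (s - 1) * (1 / (1 + l)) with hI
  have hIpos : 0 < I := base_integral_pos hs0 hs1
  set F : Fin n → Fin n → ℝ → ℝ := fun i j l =>
    (y i * y j / (p i + p j)) *
      (l ^ (s-1) * (p i / (p i + l)) + l ^ (s-1) * (p j / (p j + l))) with hF
  have hplus : ∀ i j : Fin n, 0 < p i + p j := fun i j => by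
    have := hp i; have := hp j; linarith
  have hFint : ∀ i j, IntegrableOn (F i j) (Ioi (0:ℝ)) := fun i j =>
    (((rep_integrable hs0 hs1 (hp i)).add (rep_integrable hs0 hs1 (hp j))).const_mul _)
  have hFval : ∀ i j, ∫ l in Ioi (0:ℝ), F i j l
      = I * (y i * y j * ((p i ^ s + p j ^ s) / (p i + p j))) := by
    intro i j
    calc ∫ l in Ioi (0:ℝ), F i j l
        = (y i * y j / (p i + p j)) * ∫ l in Ioi (0:ℝ),
            (l ^ (s-1) * (p i / (p i + l)) + l ^ (s-1) * (p j / (p j + l))) :=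
          MeasureTheory.integral_const_mul _ _
      _ = (y i * y j / (p i + p j)) * (I * p i ^ s + I * p j ^ s) := by
          rw [MeasureTheory.integral_add (rep_integrable hs0 hs1 (hp i))
            (rep_integrable hs0 hs1 (hp j)),
            rep_integral hs0 hs1 (hp i), rep_integral hs0 hs1 (hp j)]
      _ = I * (y i * y j * ((p i ^ s + p j ^ s) / (p i + p j))) := by
          field_simp
  have hswap : I * (∑ i, ∑ j, y i * y j * ((p i ^ s + p j ^ s) / (p i + p j)))
      = ∫ l in Ioi (0:ℝ), ∑ i, ∑ j, F i j l := by
    rw [MeasureTheory.integral_finset_sum _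
      (fun i _ => integrable_finset_sum _ (fun j _ => hFint i j))]
    rw [Finset.mul_sum]
    refine Finset.sum_congr rfl fun i _ => ?_
    rw [MeasureTheory.integral_finset_sum _ (fun j _ => hFint i j), Finset.mul_sum]
    exact Finset.sum_congr rfl fun j _ => (hFval i j).symm
  have hpos : ∀ l ∈ Ioi (0:ℝ), 0 < ∑ i, ∑ j, F i j l := by
    intro l hl
    have hl0 : (0:ℝ) < l := hl
    set a : Fin n → ℝ := fun i => y i / (p i + l) with ha
    set w : Fin n → ℝ := fun i => y i * p i / (p i + l) with hw
    have hident : ∀ i j, F i j l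
        = (l ^ (s-1) * l) * (a i * a j)
          + (2 * l ^ (s-1)) * (w i * w j / (p i + p j)) := by
      intro i j
      have h1 : p i + l ≠ 0 := by have := hp i; positivity
      have h2 : p j + l ≠ 0 := by have := hp j; positivity
      have h3 : p i + p j ≠ 0 := (hplus i j).ne'
      rw [hF, ha, hw]
      field_simp
      ring
    rw [Finset.sum_congr rfl (fun i _ => Finset.sum_congr rfl (fun j _ => hident i j))]
    have hsplit : ∑ i, ∑ j, ((l ^ (s-1) * l) * (a i * a j)
          + (2 * l ^ (s-1)) * (w i * w j / (p i + p j)))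
        = (l ^ (s-1) * l) * ((∑ i, a i) * (∑ j, a j))
          + (2 * l ^ (s-1)) * (∑ i, ∑ j, w i * w j / (p i + p j)) := by
      rw [Finset.sum_mul_sum, Finset.mul_sum, Finset.mul_sum, ← Finset.sum_add_distrib]
      refine Finset.sum_congr rfl fun i _ => ?_
      rw [Finset.mul_sum, Finset.mul_sum, ← Finset.sum_add_distrib]
    rw [hsplit]
    have hwne : w ≠ 0 := by
      obtain ⟨i₁, hi₁⟩ := Function.ne_iff.mp hy
      have hi₁' : y i₁ ≠ 0 := by simpa using hi₁
      intro hcon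
      have : w i₁ = 0 := by rw [hcon]; rfl
      rw [hw] at this
      have hden : p i₁ + l ≠ 0 := by have := hp i₁; positivity
      exact (mul_ne_zero hi₁' (hp i₁).ne') (by
        field_simp at this
        simpa using this)
    have hc := cauchy_quadform_pos hp hinj hwne
    have h1 : 0 ≤ (l ^ (s-1) * l) * ((∑ i, a i) * (∑ j, a j)) := by
      apply mul_nonneg (by positivity)
      exact mul_self_nonneg _
    have h2 : 0 < (2 * l ^ (s-1)) * (∑ i, ∑ j, w i * w j / (p i + p j)) := by
      apply mul_pos (by positivity) hc
    linarith
  have hIntSum : IntegrableOn (fun l => ∑ i, ∑ j, F i j l) (Ioi (0:ℝ)) := by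
    apply integrable_finset_sum
    intro i _
    exact integrable_finset_sum _ (fun j _ => hFint i j)
  have hintpos := integral_pos_of_pos_on_Ioi hIntSum hpos
  rw [← hswap] at hintpos
  rcases mul_pos_iff.mp hintpos with ⟨_, h⟩ | ⟨h, _⟩
  · exact h
  · linarith

lemma rpow_succ' {x : ℝ} (hx : 0 < x) (t : ℝ) : x ^ (t + 1) = x * x ^ t := by
  rw [Real.rpow_add hx, Real.rpow_one]; ring

/-- PD of the Kwong form for `-1 < s < 1`. -/
lemma kwong_pd {n : ℕ} {p : Fin n → ℝ} (hp : ∀ i, 0 < p i) (hinj : Function.Injective p)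
    {s : ℝ} (hs0 : -1 < s) (hs1 : s < 1) {y : Fin n → ℝ} (hy : y ≠ 0) :
    0 < ∑ i, ∑ j, y i * y j * ((p i ^ s + p j ^ s) / (p i + p j)) := by
  rcases lt_trichotomy s 0 with hneg | hzero | hposs
  · -- reduce to -s via congruence
    set z : Fin n → ℝ := fun i => y i * p i ^ s with hz
    have hzne : z ≠ 0 := by
      obtain ⟨i₁, hi₁⟩ := Function.ne_iff.mp hy
      have : y i₁ ≠ 0 := by simpa using hi₁
      refine Function.ne_iff.mpr ⟨i₁, ?_⟩
      simp only [hz, Pi.zero_apply]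
      exact mul_ne_zero this (Real.rpow_pos_of_pos (hp i₁) s).ne'
    have key : ∀ i j, y i * y j * ((p i ^ s + p j ^ s) / (p i + p j))
        = z i * z j * ((p i ^ (-s) + p j ^ (-s)) / (p i + p j)) := by
      intro i j
      have hii : p i ^ s * p i ^ (-s) = 1 := by
        rw [← Real.rpow_add (hp i)]; simp
      have hjj : p j ^ s * p j ^ (-s) = 1 := by
        rw [← Real.rpow_add (hp j)]; simp
      have hm : p i ^ s * p j ^ s * (p i ^ (-s) + p j ^ (-s)) = p i ^ s + p j ^ s := by
        rw [mul_add,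
          show p i ^ s * p j ^ s * p i ^ (-s) = (p i ^ s * p i ^ (-s)) * p j ^ s by ring, hii,
          show p i ^ s * p j ^ s * p j ^ (-s) = (p j ^ s * p j ^ (-s)) * p i ^ s by ring, hjj]
        ring
      calc y i * y j * ((p i ^ s + p j ^ s) / (p i + p j))
          = y i * y j * ((p i ^ s * p j ^ s * (p i ^ (-s) + p j ^ (-s))) / (p i + p j)) := by
            rw [hm]
        _ = z i * z j * ((p i ^ (-s) + p j ^ (-s)) / (p i + p j)) := by
            simp only [hz]; ring
    rw [Finset.sum_congr rfl (fun i _ => Finset.sum_congr rfl (fun j _ => key i j))]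
    exact kwong_core hp hinj (by linarith) (by linarith) hzne
  · subst hzero
    have hc := cauchy_quadform_pos hp hinj hy
    have h2 : ∑ i, ∑ j, y i * y j * ((p i ^ (0:ℝ) + p j ^ (0:ℝ)) / (p i + p j))
        = 2 * ∑ i, ∑ j, y i * y j / (p i + p j) := by
      rw [Finset.mul_sum]
      refine Finset.sum_congr rfl fun i _ => ?_
      rw [Finset.mul_sum]
      refine Finset.sum_congr rfl fun j _ => ?_
      rw [Real.rpow_zero, Real.rpow_zero]
      ring
    rw [h2]
    linarith
  · exact kwong_core hp hinj hposs hs1 hy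

/-- On the hyperplane `∑ x = 0` the Kwong form reduces (with sign flip) to the
form with parameter `r - 2`. -/
lemma kwong_hyperplane {n : ℕ} {p : Fin n → ℝ} (hp : ∀ i, 0 < p i) (r : ℝ)
    {x : Fin n → ℝ} (hx : ∑ i, x i = 0) :
    ∑ i, ∑ j, x i * x j * ((p i ^ r + p j ^ r) / (p i + p j))
      = - ∑ i, ∑ j, (x i * p i) * (x j * p j) * ((p i ^ (r-2) + p j ^ (r-2)) / (p i + p j)) := by
  classical
  have hent : ∀ i j, x i * x j * ((p i ^ r + p j ^ r) / (p i + p j))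
      = (x i * p i ^ (r-1)) * x j + x i * (x j * p j ^ (r-1))
        - (x i * p i) * (x j * p j) * ((p i ^ (r-2) + p j ^ (r-2)) / (p i + p j)) := by
    intro i j
    have hd : p i + p j ≠ 0 := by have := hp i; have := hp j; positivity
    have e1i : p i ^ (r-1) = p i * p i ^ (r-2) := by
      rw [← rpow_succ' (hp i) (r-2)]; congr 1; ring
    have e1j : p j ^ (r-1) = p j * p j ^ (r-2) := by
      rw [← rpow_succ' (hp j) (r-2)]; congr 1; ring
    have e2i : p i ^ r = p i * p i ^ (r-1) := by
      rw [← rpow_succ' (hp i) (r-1)]; congr 1; ring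
    have e2j : p j ^ r = p j * p j ^ (r-1) := by
      rw [← rpow_succ' (hp j) (r-1)]; congr 1; ring
    rw [e2i, e2j, e1i, e1j]
    field_simp
    ring
  rw [Finset.sum_congr rfl (fun i _ => Finset.sum_congr rfl (fun j _ => hent i j))]
  have hinner : ∀ i : Fin n, ∑ j, ((x i * p i ^ (r-1)) * x j + x i * (x j * p j ^ (r-1))
        - (x i * p i) * (x j * p j) * ((p i ^ (r-2) + p j ^ (r-2)) / (p i + p j)))
      = x i * (∑ j, x j * p j ^ (r-1))
        - ∑ j, (x i * p i) * (x j * p j) * ((p i ^ (r-2) + p j ^ (r-2)) / (p i + p j)) := by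
    intro i
    rw [Finset.sum_sub_distrib, Finset.sum_add_distrib, ← Finset.mul_sum, ← Finset.mul_sum,
      hx, mul_zero, zero_add]
  rw [Finset.sum_congr rfl (fun i _ => hinner i), Finset.sum_sub_distrib, ← Finset.sum_mul,
    hx, zero_mul, zero_sub]

open Matrix

section Counting
variable {n : ℕ} {A : Matrix (Fin n) (Fin n) ℝ}

/-- quadratic form in terms of eigenvalues -/
lemma quad_eq_sum (hA : A.IsHermitian) (x : Fin n → ℝ) :
    x ⬝ᵥ (A *ᵥ x) = ∑ i, hA.eigenvalues i * (x ᵥ* (hA.eigenvectorUnitary : Matrix (Fin n) (Fin n) ℝ)) i ^ 2 := by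
  set U : Matrix (Fin n) (Fin n) ℝ := (hA.eigenvectorUnitary : Matrix (Fin n) (Fin n) ℝ) with hU
  set c : Fin n → ℝ := x ᵥ* U with hc
  have hstar : star U *ᵥ x = c := by
    ext j
    simp [hc, Matrix.mulVec, Matrix.vecMul, dotProduct, Matrix.conjTranspose_apply,
      mul_comm]
  conv_lhs => rw [hA.spectral_theorem, Unitary.conjStarAlgAut_apply]
  rw [← Matrix.mulVec_mulVec, ← Matrix.mulVec_mulVec, hstar, Matrix.dotProduct_mulVec]
  rw [← hU, ← hc]
  simp [Matrix.mulVec_diagonal, dotProduct, mul_comm, sq, mul_assoc, mul_left_comm]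

end Counting

section Counting2
variable {n : ℕ} {A : Matrix (Fin n) (Fin n) ℝ}

lemma exists_pos_eigen (hA : A.IsHermitian) {v : Fin n → ℝ} (hv : 0 < v ⬝ᵥ (A *ᵥ v)) :
    ∃ i, 0 < hA.eigenvalues i := by
  by_contra hcon
  push_neg at hcon
  rw [quad_eq_sum hA] at hv
  have : ∑ i, hA.eigenvalues i * (v ᵥ* (hA.eigenvectorUnitary : Matrix (Fin n) (Fin n) ℝ)) i ^ 2
      ≤ 0 :=
    Finset.sum_nonpos fun i _ => mul_nonpos_of_nonpos_of_nonneg (hcon i) (sq_nonneg _)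
  linarith

lemma eigenvectorBasis_dot (hA : A.IsHermitian) (j k : Fin n) :
    ⇑(hA.eigenvectorBasis j) ⬝ᵥ ⇑(hA.eigenvectorBasis k) = if j = k then (1:ℝ) else 0 := by
  have horth := hA.eigenvectorBasis.orthonormal
  rw [orthonormal_iff_ite] at horth
  have := horth j k
  rw [← this]
  simp [PiLp.inner_apply, RCLike.inner_apply, dotProduct, mul_comm]

/-- if the form is negative on the hyperplane `∑ x = 0`, at most one eigenvalue
is nonnegative -/
lemma card_nonneg_le_one (hA : A.IsHermitian)
    (hQ : ∀ x : Fin n → ℝ, x ≠ 0 → (∑ i, x i = 0) → x ⬝ᵥ (A *ᵥ x) < 0) :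
    (Finset.univ.filter (fun i => 0 ≤ hA.eigenvalues i)).card ≤ 1 := by
  classical
  by_contra hcon
  push_neg at hcon
  obtain ⟨j₁, hj₁, j₂, hj₂, hne⟩ := Finset.one_lt_card.mp hcon
  have heig1 : 0 ≤ hA.eigenvalues j₁ := (Finset.mem_filter.mp hj₁).2
  have heig2 : 0 ≤ hA.eigenvalues j₂ := (Finset.mem_filter.mp hj₂).2
  set b₁ : Fin n → ℝ := ⇑(hA.eigenvectorBasis j₁) with hb₁
  set b₂ : Fin n → ℝ := ⇑(hA.eigenvectorBasis j₂) with hb₂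
  have hd11 : b₁ ⬝ᵥ b₁ = 1 := by rw [hb₁, eigenvectorBasis_dot hA]; simp
  have hd22 : b₂ ⬝ᵥ b₂ = 1 := by rw [hb₂, eigenvectorBasis_dot hA]; simp
  have hd12 : b₁ ⬝ᵥ b₂ = 0 := by rw [hb₁, hb₂, eigenvectorBasis_dot hA]; simp [hne]
  have hd21 : b₂ ⬝ᵥ b₁ = 0 := by rw [hb₁, hb₂, eigenvectorBasis_dot hA]; simp [hne.symm]
  set u : ℝ := ∑ i, b₁ i with hu
  set v : ℝ := ∑ i, b₂ i with hv
  -- choose coefficients α β, not both zero, with α u + β v = 0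
  obtain ⟨α, β, hαβ, hsum⟩ : ∃ α β : ℝ, ¬(α = 0 ∧ β = 0) ∧ α * u + β * v = 0 := by
    by_cases h : u = 0 ∧ v = 0
    · exact ⟨1, 0, by simp, by simp [h.1, h.2]⟩
    · refine ⟨v, -u, ?_, by ring⟩
      intro hc
      exact h ⟨neg_eq_zero.mp hc.2, hc.1⟩
  set x : Fin n → ℝ := α • b₁ + β • b₂ with hx
  have hdot1 : b₁ ⬝ᵥ x = α := by
    rw [hx]; simp [dotProduct_add, dotProduct_smul, hd11, hd12]
  have hdot2 : b₂ ⬝ᵥ x = β := by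
    rw [hx]; simp [dotProduct_add, dotProduct_smul, hd21, hd22]
  have hxne : x ≠ 0 := by
    intro hc
    apply hαβ
    constructor
    · rw [← hdot1, hc, dotProduct_zero]
    · rw [← hdot2, hc, dotProduct_zero]
  have hxsum : ∑ i, x i = 0 := by
    rw [hx]
    simp only [Pi.add_apply, Pi.smul_apply, smul_eq_mul]
    rw [Finset.sum_add_distrib, ← Finset.mul_sum, ← Finset.mul_sum, ← hu, ← hv, hsum]
  have hAx : A *ᵥ x = (α * hA.eigenvalues j₁) • b₁ + (β * hA.eigenvalues j₂) • b₂ := by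
    rw [hx, Matrix.mulVec_add, Matrix.mulVec_smul, Matrix.mulVec_smul,
      hA.mulVec_eigenvectorBasis, hA.mulVec_eigenvectorBasis, ← hb₁, ← hb₂]
    ext i
    simp [mul_comm, mul_assoc, mul_left_comm]
  have hQx : x ⬝ᵥ (A *ᵥ x) = hA.eigenvalues j₁ * α ^ 2 + hA.eigenvalues j₂ * β ^ 2 := by
    rw [hAx, hx]
    simp only [add_dotProduct, smul_dotProduct, dotProduct_add,
      dotProduct_smul, hd11, hd12, hd21, hd22, smul_eq_mul]
    ring
  have hge : 0 ≤ x ⬝ᵥ (A *ᵥ x) := by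
    rw [hQx]; positivity
  exact absurd (hQ x hxne hxsum) (not_lt.mpr hge)

end Counting2



open Matrix

/-- The Kwong matrix: (i,j) entry is `(p i ^ r + p j ^ r) / (p i + p j)`. -/
noncomputable def kwong {n : ℕ} (p : Fin n → ℝ) (r : ℝ) : Matrix (Fin n) (Fin n) ℝ :=
  Matrix.of fun i j => (p i ^ r + p j ^ r) / (p i + p j)

lemma kwong_isHermitian {n : ℕ} (p : Fin n → ℝ) (r : ℝ) : (kwong p r).IsHermitian := by
  ext i j
  simp only [kwong, Matrix.conjTranspose_apply, Matrix.of_apply, star_trivial]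
  rw [add_comm (p j ^ r), add_comm (p j)]

/-- The inertia of a real symmetric matrix: the numbers of positive, zero and
negative eigenvalues, counted with multiplicity. -/
noncomputable def inertia {n : ℕ} (A : Matrix (Fin n) (Fin n) ℝ) (hA : A.IsHermitian) :
    ℕ × ℕ × ℕ :=
  ({i | 0 < hA.eigenvalues i}.ncard, {i | hA.eigenvalues i = 0}.ncard,
    {i | hA.eigenvalues i < 0}.ncard)

/-- for `n ≥ 2`, distinct positive `p i` and `1 < r < 3`, the inertia of
the Kwong matrix `Kᵣ` is `(1, 0, n - 1)`. -/
theorem inertia_kwong_one_lt_r_lt_three {n : ℕ} (hn : 2 ≤ n) (p : Fin n → ℝ)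
    (hpos : ∀ i, 0 < p i) (hinj : Function.Injective p)
    (r : ℝ) (hr1 : 1 < r) (hr2 : r < 3) :
    inertia (kwong p r) (kwong_isHermitian p r) = (1, 0, n - 1) := by
  classical
  set A := kwong p r with hA_def
  set hA := kwong_isHermitian p r with hhA
  -- quadratic form of the Kwong matrix
  have hquad : ∀ x : Fin n → ℝ, x ⬝ᵥ (A *ᵥ x)
      = ∑ i, ∑ j, x i * x j * ((p i ^ r + p j ^ r) / (p i + p j)) := by
    intro x
    simp only [hA_def, kwong, dotProduct, Matrix.mulVec, Matrix.of_apply,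
      Finset.mul_sum]
    exact Finset.sum_congr rfl fun i _ => Finset.sum_congr rfl fun j _ => by ring
  have i₀ : Fin n := ⟨0, by omega⟩
  -- positivity somewhere
  have hApos : ∃ i, 0 < hA.eigenvalues i := by
    apply exists_pos_eigen hA (v := Pi.single i₀ 1)
    rw [hquad]
    have hval : ∑ i, ∑ j, (Pi.single i₀ 1 : Fin n → ℝ) i * (Pi.single i₀ 1 : Fin n → ℝ) j *
        ((p i ^ r + p j ^ r) / (p i + p j))
        = (p i₀ ^ r + p i₀ ^ r) / (p i₀ + p i₀) := by
      rw [Finset.sum_eq_single i₀]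
      · rw [Finset.sum_eq_single i₀]
        · simp
        · intro b _ hb; simp [Pi.single_apply, hb]
        · intro h; exact absurd (Finset.mem_univ _) h
      · intro b _ hb
        apply Finset.sum_eq_zero
        intro j _
        simp [Pi.single_apply, hb]
      · intro h; exact absurd (Finset.mem_univ _) h
    rw [hval]
    have h0 : 0 < p i₀ := hpos i₀
    have h1 : 0 < p i₀ ^ r := Real.rpow_pos_of_pos h0 r
    positivity
  -- negativity on the hyperplane
  have hQneg : ∀ x : Fin n → ℝ, x ≠ 0 → (∑ i, x i = 0) → x ⬝ᵥ (A *ᵥ x) < 0 := by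
    intro x hxne hxsum
    rw [hquad, kwong_hyperplane hpos r hxsum, neg_lt_zero]
    set y : Fin n → ℝ := fun i => x i * p i with hy
    have hyne : y ≠ 0 := by
      obtain ⟨i₁, hi₁⟩ := Function.ne_iff.mp hxne
      refine Function.ne_iff.mpr ⟨i₁, ?_⟩
      simp only [hy, Pi.zero_apply]
      exact mul_ne_zero (by simpa using hi₁) (hpos i₁).ne'
    have hpd := kwong_pd hpos hinj (s := r - 2) (by linarith) (by linarith) hyne
    simpa [hy] using hpd
  -- counting
  have hcard_le := card_nonneg_le_one hA hQneg
  obtain ⟨ip, hip⟩ := hApos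
  have hsub : Finset.univ.filter (fun i => 0 < hA.eigenvalues i)
      ⊆ Finset.univ.filter (fun i => 0 ≤ hA.eigenvalues i) :=
    by
      intro i hi
      rw [Finset.mem_filter] at hi ⊢
      exact ⟨hi.1, le_of_lt hi.2⟩
  have hpos_ge : 1 ≤ (Finset.univ.filter (fun i => 0 < hA.eigenvalues i)).card :=
    Finset.card_pos.mpr ⟨ip, by simp [hip]⟩
  have hposcard : (Finset.univ.filter (fun i => 0 < hA.eigenvalues i)).card = 1 :=
    le_antisymm ((Finset.card_le_card hsub).trans hcard_le) hpos_ge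
  have hnonneg_card : (Finset.univ.filter (fun i => 0 ≤ hA.eigenvalues i)).card = 1 :=
    le_antisymm hcard_le (hpos_ge.trans (Finset.card_le_card hsub))
  have hzerocard : (Finset.univ.filter (fun i => hA.eigenvalues i = 0)).card = 0 := by
    have hsub0 : Finset.univ.filter (fun i => hA.eigenvalues i = 0)
        ⊆ Finset.univ.filter (fun i => 0 ≤ hA.eigenvalues i) :=
      by
        intro i hi
        rw [Finset.mem_filter] at hi ⊢
        exact ⟨hi.1, le_of_eq hi.2.symm⟩
    have hdisj : Disjoint (Finset.univ.filter (fun i => 0 < hA.eigenvalues i))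
        (Finset.univ.filter (fun i => hA.eigenvalues i = 0)) := by
      rw [Finset.disjoint_left]
      intro a h1 h2
      rw [Finset.mem_filter] at h1 h2
      exact absurd h2.2 (ne_of_gt h1.2)
    have hunion := Finset.card_union_of_disjoint hdisj
    have hsubu : (Finset.univ.filter (fun i => 0 < hA.eigenvalues i))
        ∪ (Finset.univ.filter (fun i => hA.eigenvalues i = 0))
        ⊆ Finset.univ.filter (fun i => 0 ≤ hA.eigenvalues i) :=
      Finset.union_subset hsub hsub0
    have := Finset.card_le_card hsubu
    rw [hunion, hposcard, hnonneg_card] at this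
    omega
  have hnegcard : (Finset.univ.filter (fun i => hA.eigenvalues i < 0)).card = n - 1 := by
    have hsplit := Finset.card_filter_add_card_filter_not
      (s := (Finset.univ : Finset (Fin n))) (p := fun i => 0 ≤ hA.eigenvalues i)
    have hcongr : Finset.univ.filter (fun i => ¬ 0 ≤ hA.eigenvalues i)
        = Finset.univ.filter (fun i => hA.eigenvalues i < 0) := by
      apply Finset.filter_congr
      intro i _
      simp [not_le]
    rw [hcongr, hnonneg_card, Finset.card_univ, Fintype.card_fin] at hsplit
    omega
  have hncard : ∀ (P : Fin n → Prop) (c : ℕ),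
      (Finset.univ.filter (fun i => P i)).card = c → {i | P i}.ncard = c := by
    intro P c hc
    rw [← hc, ← Set.ncard_coe_finset]
    congr 1
    ext i; simp
  simp only [inertia]
  rw [hncard _ _ hposcard, hncard _ _ hzerocard, hncard _ _ hnegcard]
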